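/- Let n ≥ 1 and 1 ≤ k ≤ n, and regard the cyclic (n,k)-matrix M_{n,k} as an integer matrix. If gcd(n,k) = 1 then |det(M_{n,k})| = k; if gcd(n,k) ≥ 2 then det(M_{n,k}) = 0. -/

import Mathlib

open scoped Classical in
/-- The cyclic `(n,k)`-matrix: the `(i,j)` entry equals `1` iff
`j ≡ ik + a (mod n)` for some `0 ≤ a ≤ k − 1`. -/
noncomputable def cyc (n k : ℕ) : Fin n → Fin n → ℕ := fun i j =>
  if ∃ a < k, (j : ℕ) ≡ (i : ℕ) * k + a [MOD n] then 1 else 0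

lemma pow_nat_mod' {ζ : ℂ} {n : ℕ} (h : ζ ^ n = 1) (x : ℕ) : ζ ^ x = ζ ^ (x % n) := by
  conv_lhs => rw [← Nat.div_add_mod x n]
  rw [pow_add, pow_mul, h, one_pow, one_mul]

lemma pow_nat_modeq' {ζ : ℂ} {n : ℕ} (h : ζ ^ n = 1) {x y : ℕ} (hxy : x ≡ y [MOD n]) :
    ζ ^ x = ζ ^ y := by
  rw [pow_nat_mod' h x, pow_nat_mod' h y, hxy]

lemma cyc_det_coprime (n k : ℕ) (hn : 1 ≤ n) (hk1 : 1 ≤ k) (hk : k ≤ n)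
    (hg : Nat.gcd n k = 1) :
    (Matrix.det (Matrix.of fun i j : Fin n => (cyc n k i j : ℤ))).natAbs = k := by
  classical
  haveI : NeZero n := ⟨by omega⟩
  set Mz : Matrix (Fin n) (Fin n) ℤ := Matrix.of fun i j : Fin n => (cyc n k i j : ℤ) with hMz
  set ζ : ℂ := Complex.exp (2 * Real.pi * Complex.I / n) with hζdef
  have hζ : IsPrimitiveRoot ζ n := Complex.isPrimitiveRoot_exp n (by omega)
  have hζ1 : ζ ^ n = 1 := hζ.pow_eq_one
  -- the multiplication-by-k permutation
  have hmlt : ∀ i : Fin n, (i : ℕ) * k % n < n := fun i => Nat.mod_lt _ (by omega)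
  set m : Fin n → Fin n := fun i => ⟨(i : ℕ) * k % n, hmlt i⟩ with hmdef
  have hminj : Function.Injective m := by
    intro i i' h
    have h1 : (i : ℕ) * k ≡ (i' : ℕ) * k [MOD n] := by
      have := congrArg Fin.val h
      simpa [hmdef, Nat.ModEq] using this
    have h2 : (i : ℕ) ≡ (i' : ℕ) [MOD n] :=
      Nat.ModEq.cancel_right_of_coprime hg h1
    have : (i : ℕ) = (i' : ℕ) := by
      have := h2
      unfold Nat.ModEq at this
      rwa [Nat.mod_eq_of_lt i.2, Nat.mod_eq_of_lt i'.2] at this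
    exact Fin.ext this
  set π : Equiv.Perm (Fin n) := Equiv.ofBijective m (Finite.injective_iff_bijective.mp hminj)
    with hπdef
  have hπval : ∀ i : Fin n, (π i : ℕ) = (i : ℕ) * k % n := fun i => rfl
  -- the Vandermonde (DFT) matrix
  set F : Matrix (Fin n) (Fin n) ℂ := Matrix.vandermonde (fun i : Fin n => ζ ^ (i : ℕ)) with hFdef
  have hF : F.det ≠ 0 := by
    rw [hFdef, Matrix.det_vandermonde_ne_zero_iff]
    intro i j hij
    exact Fin.ext (hζ.pow_inj i.2 j.2 hij)
  set g : Fin n → ℂ := fun j => ∑ a ∈ Finset.range k, (ζ ^ (j : ℕ)) ^ a with hgdef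
  set Mc : Matrix (Fin n) (Fin n) ℂ := Matrix.of fun i j : Fin n => (cyc n k i j : ℂ) with hMc
  -- key diagonalization identity
  have key : Mc * F = (F.submatrix π id) * Matrix.diagonal g := by
    ext i j
    rw [Matrix.mul_apply, Matrix.mul_diagonal]
    have hlt : ∀ a : ℕ, ((i : ℕ) * k + a) % n < n := fun a => Nat.mod_lt _ (by omega)
    have hstep : ∀ t : Fin n, Mc i t * F t j
        = if ∃ a < k, (t : ℕ) ≡ (i : ℕ) * k + a [MOD n] then (ζ ^ (t : ℕ)) ^ (j : ℕ) else 0 := by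
      intro t
      rw [hFdef, Matrix.vandermonde_apply]
      simp only [hMc, Matrix.of_apply, cyc]
      split <;> simp
    rw [Finset.sum_congr rfl (fun t _ => hstep t)]
    set e : ℕ → Fin n := fun a => (⟨((i : ℕ) * k + a) % n, hlt a⟩ : Fin n) with hedef
    set S : Finset (Fin n) := (Finset.range k).image e with hSdef
    have hmem : ∀ t : Fin n, (∃ a < k, (t : ℕ) ≡ (i : ℕ) * k + a [MOD n]) ↔ t ∈ S := by
      intro t
      rw [hSdef, Finset.mem_image]
      constructor
      · rintro ⟨a, ha, hmod⟩
        refine ⟨a, Finset.mem_range.mpr ha, ?_⟩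
        have h' : (t : ℕ) % n = ((i : ℕ) * k + a) % n := hmod
        rw [Nat.mod_eq_of_lt t.2] at h'
        exact Fin.ext h'.symm
      · rintro ⟨a, ha, hmod⟩
        refine ⟨a, Finset.mem_range.mp ha, ?_⟩
        have h' : (t : ℕ) = ((i : ℕ) * k + a) % n := (congrArg Fin.val hmod).symm
        show (t : ℕ) % n = ((i : ℕ) * k + a) % n
        rw [Nat.mod_eq_of_lt t.2, h']
    have heinj : ∀ a ∈ Finset.range k, ∀ a' ∈ Finset.range k, e a = e a' → a = a' := by
      intro a ha a' ha' h
      have h1 : ((i : ℕ) * k + a) % n = ((i : ℕ) * k + a') % n := congrArg Fin.val h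
      have h2 : a ≡ a' [MOD n] := Nat.ModEq.add_left_cancel' _ h1
      have hak : a < k := Finset.mem_range.mp ha
      have hak' : a' < k := Finset.mem_range.mp ha'
      unfold Nat.ModEq at h2
      rwa [Nat.mod_eq_of_lt (by omega), Nat.mod_eq_of_lt (by omega)] at h2
    rw [show (Finset.univ : Finset (Fin n)) = Finset.univ from rfl]
    rw [← Finset.sum_subset (Finset.subset_univ S) (by
      intro t _ htS
      rw [if_neg]
      intro hP
      exact htS ((hmem t).mp hP))]
    rw [hSdef, Finset.sum_image heinj]
    have hval : ∀ a ∈ Finset.range k,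
        (if ∃ b < k, ((e a : Fin n) : ℕ) ≡ (i : ℕ) * k + b [MOD n] then
          (ζ ^ ((e a : Fin n) : ℕ)) ^ (j : ℕ) else 0)
        = ζ ^ (((i : ℕ) * k + a) * (j : ℕ)) := by
      intro a ha
      rw [if_pos ((hmem (e a)).mpr (Finset.mem_image_of_mem e ha))]
      have : ((e a : Fin n) : ℕ) = ((i : ℕ) * k + a) % n := rfl
      rw [this, ← pow_mul]
      exact pow_nat_modeq' hζ1 (Nat.ModEq.mul_right _ (Nat.mod_modEq _ n))
    rw [Finset.sum_congr rfl hval]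
    -- RHS
    have hR1 : F.submatrix π id i j = ζ ^ ((i : ℕ) * k * (j : ℕ)) := by
      rw [Matrix.submatrix_apply, hFdef, Matrix.vandermonde_apply, id]
      rw [← pow_mul]
      exact pow_nat_modeq' hζ1 (Nat.ModEq.mul_right _ (by rw [hπval]; exact Nat.mod_modEq _ n))
    rw [hR1, hgdef, Finset.mul_sum]
    refine Finset.sum_congr rfl fun a _ => ?_
    rw [← pow_mul, ← pow_add]
    congr 1
    ring
  -- take determinants
  have hdet := congrArg Matrix.det key
  rw [Matrix.det_mul, Matrix.det_mul, Matrix.det_permute, Matrix.det_diagonal] at hdet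
  -- compute the product of eigenvalues
  have hπ0 : π 0 = 0 := by
    apply Fin.ext
    rw [hπval]
    simp
  have hg0 : g 0 = (k : ℂ) := by
    simp [hgdef]
  set E := (Finset.univ : Finset (Fin n)).erase 0 with hE
  have hne : ∀ j ∈ E, ζ ^ (j : ℕ) - 1 ≠ 0 := by
    intro j hj
    rw [sub_ne_zero]
    intro h1
    have := (hζ.pow_eq_one_iff_dvd _).mp h1
    have hj0 : (j : ℕ) = 0 := Nat.eq_zero_of_dvd_of_lt this j.2
    exact (Finset.mem_erase.mp hj).1 (Fin.ext hj0)
  have hgeom : ∀ j : Fin n, g j * (ζ ^ (j : ℕ) - 1) = ζ ^ ((π j : ℕ)) - 1 := by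
    intro j
    rw [hgdef]
    rw [geom_sum_mul]
    congr 1
    rw [← pow_mul, hπval]
    exact pow_nat_modeq' hζ1 (Nat.mod_modEq _ n).symm
  have hπE : ∀ j ∈ E, π j ∈ E := by
    intro j hj
    rcases Finset.mem_erase.mp hj with ⟨hj0, -⟩
    refine Finset.mem_erase.mpr ⟨fun h => hj0 ?_, Finset.mem_univ _⟩
    exact π.injective (h.trans hπ0.symm)
  have hπE' : ∀ j ∈ E, π.symm j ∈ E := by
    intro j hj
    rcases Finset.mem_erase.mp hj with ⟨hj0, -⟩
    refine Finset.mem_erase.mpr ⟨fun h => hj0 ?_, Finset.mem_univ _⟩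
    rw [← hπ0, ← h, Equiv.apply_symm_apply]
  have hperm : ∏ j ∈ E, (ζ ^ ((π j : ℕ)) - 1) = ∏ j ∈ E, (ζ ^ (j : ℕ) - 1) := by
    refine Finset.prod_nbij' (fun j => π j) (fun j => π.symm j) hπE hπE'
      (fun a _ => Equiv.symm_apply_apply _ _) (fun a _ => Equiv.apply_symm_apply _ _)
      (fun a _ => rfl)
  have hprodE : ∏ j ∈ E, g j = 1 := by
    have hP : ∏ j ∈ E, (ζ ^ (j : ℕ) - 1) ≠ 0 := Finset.prod_ne_zero_iff.mpr hne
    have h1 : (∏ j ∈ E, g j) * ∏ j ∈ E, (ζ ^ (j : ℕ) - 1) = ∏ j ∈ E, (ζ ^ (j : ℕ) - 1) := by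
      rw [← Finset.prod_mul_distrib, Finset.prod_congr rfl (fun j _ => hgeom j)]
      exact hperm
    have := mul_right_cancel₀ hP (h1.trans (one_mul _).symm)
    exact this
  have hprod : ∏ j, g j = (k : ℂ) := by
    rw [← Finset.mul_prod_erase Finset.univ g (Finset.mem_univ 0), hg0, ← hE, hprodE, mul_one]
  rw [hprod] at hdet
  -- cancel det F
  have hMcdet : Mc.det = (Equiv.Perm.sign π : ℂ) * (k : ℂ) := by
    apply mul_right_cancel₀ hF
    rw [hdet]
    ring
  -- go back to ℤ
  have hmap : Mz.map (Int.castRingHom ℂ) = Mc := by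
    ext i j
    simp [hMz, hMc]
  have hcast : ((Mz.det : ℤ) : ℂ) = Mc.det := by
    exact (RingHom.map_det (Int.castRingHom ℂ) Mz).trans
      (by rw [RingHom.mapMatrix_apply, hmap])
  have hsq : Mz.det ^ 2 = (k : ℤ) ^ 2 := by
    have hsgn : ((Equiv.Perm.sign π : ℤ) : ℂ) ^ 2 = 1 := by
      rcases Int.units_eq_one_or (Equiv.Perm.sign π) with h | h <;> rw [h] <;> norm_num
    have : ((Mz.det ^ 2 : ℤ) : ℂ) = (((k : ℤ) ^ 2 : ℤ) : ℂ) := by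
      rw [Int.cast_pow, Int.cast_pow, Int.cast_natCast]
      rw [hcast, hMcdet]
      rw [mul_pow]
      rw [show ((Equiv.Perm.sign π : ℤˣ) : ℂ) = ((Equiv.Perm.sign π : ℤ) : ℂ) by push_cast; rfl]
      rw [hsgn, one_mul]
    exact_mod_cast this
  have hnat : Mz.det.natAbs ^ 2 = k ^ 2 := by
    have := congrArg Int.natAbs hsq
    simpa [Int.natAbs_pow] using this
  exact Nat.pow_left_injective (by norm_num) hnat

/-- regarding the cyclic `(n,k)`-matrix as an integer matrix, its
determinant has absolute value `k` when `gcd(n,k) = 1`, and is `0` when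
`gcd(n,k) ≥ 2`. -/
theorem stmt_17 (n k : ℕ) (hn : 1 ≤ n) (hk1 : 1 ≤ k) (hk : k ≤ n) :
    (Nat.gcd n k = 1 →
      (Matrix.det (Matrix.of fun i j : Fin n => (cyc n k i j : ℤ))).natAbs = k) ∧
    (2 ≤ Nat.gcd n k →
      Matrix.det (Matrix.of fun i j : Fin n => (cyc n k i j : ℤ)) = 0) := by
  constructor
  · exact cyc_det_coprime n k hn hk1 hk
  · intro hg2
    have hdn : Nat.gcd n k ∣ n := Nat.gcd_dvd_left _ _
    have hdk : Nat.gcd n k ∣ k := Nat.gcd_dvd_right _ _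
    have hdpos : 0 < Nat.gcd n k := by omega
    have h1 : 0 < n / Nat.gcd n k := Nat.div_pos (Nat.le_of_dvd (by omega) hdn) hdpos
    have h2 : n / Nat.gcd n k < n := Nat.div_lt_self (by omega) hg2
    have h0n : 0 < n := by omega
    have hmul : n / Nat.gcd n k * k = n * (k / Nat.gcd n k) :=
      calc n / Nat.gcd n k * k
          = n / Nat.gcd n k * Nat.gcd n k * (k / Nat.gcd n k) := by
            rw [mul_assoc, Nat.mul_div_cancel' hdk]
        _ = n * (k / Nat.gcd n k) := by rw [Nat.div_mul_cancel hdn]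
    have hmod : ∀ a : ℕ, (n / Nat.gcd n k * k + a) ≡ 0 * k + a [MOD n] := by
      intro a
      have : n / Nat.gcd n k * k ≡ 0 [MOD n] := by
        rw [Nat.modEq_zero_iff_dvd, hmul]
        exact ⟨_, rfl⟩
      simpa using this.add_right a
    have hrow : (Matrix.of fun i j : Fin n => (cyc n k i j : ℤ)) ⟨n / Nat.gcd n k, h2⟩
        = (Matrix.of fun i j : Fin n => (cyc n k i j : ℤ)) ⟨0, h0n⟩ := by
      funext j
      simp only [Matrix.of_apply]
      congr 1
      unfold cyc
      refine if_congr ?_ rfl rfl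
      constructor
      · rintro ⟨a, ha, h⟩
        exact ⟨a, ha, h.trans (hmod a)⟩
      · rintro ⟨a, ha, h⟩
        exact ⟨a, ha, h.trans (hmod a).symm⟩
    exact Matrix.det_zero_of_row_eq (Fin.ne_of_val_ne (show n / Nat.gcd n k ≠ 0 from h1.ne'))
      hrow
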